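/- arXiv:1202.1976 — 4 statements merged into one kernel-verified Lean document; each statement's English description precedes it below -/
import Mathlib

section
/- For all nonnegative integers n, reals a, b, β, and α > 0, one has ∫_{-∞}^{∞} (a x + b)^n exp(-α x² + β x) dx = √(π/α) · exp(β²/(4α)) · H_n(b + aβ/(2α), a²/(4α)), where H_n is the two-variable Hermite polynomial. -/
open Real MeasureTheory Finset Nat

/-- Two-variable Hermite polynomial `H_n(x,y)`. -/
noncomputable def H2v (n : ℕ) (x y : ℝ) : ℝ :=
  (n ! : ℝ) * ∑ k ∈ Finset.range (n / 2 + 1),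
    x ^ (n - 2 * k) * y ^ k / (((n - 2 * k)! : ℝ) * (k ! : ℝ))

lemma aux_gamma_nat_add_half (k : ℕ) :
    Real.Gamma ((k : ℝ) + 1 / 2) = Real.sqrt π * (2 * k)! / (4 ^ k * k !) := by
  induction k with
  | zero =>
      have h0 : ((0 : ℕ) : ℝ) + 1 / 2 = 1 / 2 := by norm_num
      rw [h0, Real.Gamma_one_half_eq]; norm_num
  | succ k ih =>
    have h1 : ((k + 1 : ℕ) : ℝ) + 1 / 2 = ((k : ℝ) + 1 / 2) + 1 := by push_cast; ring
    rw [h1, Real.Gamma_add_one (by positivity), ih]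
    have h2 : (2 * (k + 1)) = (2 * k + 1) + 1 := by ring
    have h3 : ((2 * (k + 1))! : ℝ) = (2 * k + 2) * ((2 * k + 1) * (2 * k)!) := by
      rw [h2, Nat.factorial_succ, Nat.factorial_succ]; push_cast; ring
    have h4 : ((k + 1)! : ℝ) = (k + 1) * k ! := by
      rw [Nat.factorial_succ]; push_cast; ring
    have hk : (k ! : ℝ) ≠ 0 := by positivity
    rw [h3, h4]
    field_simp
    ring

lemma aux_integrable_pow_mul_exp (α : ℝ) (hα : 0 < α) (m : ℕ) :
    Integrable (fun x : ℝ => x ^ m * Real.exp (-α * x ^ 2)) := by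
  have := integrable_rpow_mul_exp_neg_mul_sq hα (s := (m : ℝ))
    (lt_of_lt_of_le (by norm_num : (-1 : ℝ) < 0) (Nat.cast_nonneg m))
  simpa [Real.rpow_natCast] using this

lemma aux_moment_odd (α : ℝ) (k : ℕ) :
    ∫ x : ℝ, x ^ (2 * k + 1) * Real.exp (-α * x ^ 2) = 0 := by
  set f : ℝ → ℝ := fun x => x ^ (2 * k + 1) * Real.exp (-α * x ^ 2) with hf
  have hodd : ∀ x : ℝ, f (-x) = -f x := by
    intro x
    simp only [hf]
    rw [show (-x) ^ (2 * k + 1) = -(x ^ (2 * k + 1)) by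
      rw [neg_pow]; simp [pow_succ, pow_mul], neg_sq]
    ring
  have h1 : (∫ x : ℝ, f (-x)) = ∫ x : ℝ, f x := integral_neg_eq_self f volume
  have h2 : (∫ x : ℝ, f (-x)) = -∫ x : ℝ, f x := by
    simp_rw [hodd]; exact integral_neg f
  linarith [h1, h2]

lemma aux_moment_even (α : ℝ) (hα : 0 < α) (k : ℕ) :
    ∫ x : ℝ, x ^ (2 * k) * Real.exp (-α * x ^ 2) =
      Real.sqrt (π / α) * (2 * k)! / (k ! * (4 * α) ^ k) := by
  have h1 : (∫ x : ℝ, x ^ (2 * k) * Real.exp (-α * x ^ 2)) =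
      2 * ∫ x in Set.Ioi (0 : ℝ), x ^ (2 * k) * Real.exp (-α * x ^ 2) := by
    rw [← integral_comp_abs (f := fun x : ℝ => x ^ (2 * k) * Real.exp (-α * x ^ 2))]
    congr 1 with x
    rw [pow_mul, pow_mul, sq_abs]
  have h2 : (∫ x in Set.Ioi (0 : ℝ), x ^ (2 * k) * Real.exp (-α * x ^ 2)) =
      α ^ (-((2 * k : ℝ) + 1) / 2) * (1 / 2) * Real.Gamma (((2 * k : ℝ) + 1) / 2) := by
    rw [← integral_rpow_mul_exp_neg_mul_rpow (p := 2) (q := (2 * k : ℝ)) (b := α)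
      (by norm_num) (lt_of_lt_of_le (by norm_num : (-1 : ℝ) < 0) (by positivity : (0 : ℝ) ≤ 2 * k)) hα]
    refine setIntegral_congr_fun measurableSet_Ioi (fun x hx => ?_)
    rw [show ((2 * k : ℝ)) = ((2 * k : ℕ) : ℝ) by push_cast; ring, Real.rpow_natCast,
      show ((2 : ℝ)) = ((2 : ℕ) : ℝ) by norm_num, Real.rpow_natCast]
  have h3 : ((2 * k : ℝ) + 1) / 2 = (k : ℝ) + 1 / 2 := by ring
  have h4 : α ^ (-((2 * k : ℝ) + 1) / 2) = (α ^ k)⁻¹ * (Real.sqrt α)⁻¹ := by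
    rw [show -((2 * k : ℝ) + 1) / 2 = -((k : ℝ) + 1 / 2) by ring, Real.rpow_neg hα.le,
      Real.rpow_add hα, Real.rpow_natCast, Real.sqrt_eq_rpow]
    rw [mul_inv]
  rw [h1, h2, h3, h4, aux_gamma_nat_add_half, Real.sqrt_div pi_pos.le α]
  have hsa : Real.sqrt α ≠ 0 := ne_of_gt (Real.sqrt_pos.mpr hα)
  have hαk : (α : ℝ) ^ k ≠ 0 := by positivity
  have hk : (k ! : ℝ) ≠ 0 := by positivity
  field_simp
  ring

lemma aux_key (n : ℕ) (a c α : ℝ) (hα : 0 < α) :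
    ∫ x : ℝ, (a * x + c) ^ n * Real.exp (-α * x ^ 2) =
      Real.sqrt (π / α) * H2v n c (a ^ 2 / (4 * α)) := by
  have step1 : (∫ x : ℝ, (a * x + c) ^ n * Real.exp (-α * x ^ 2)) =
      ∑ j ∈ Finset.range (n + 1), ((n.choose j : ℝ) * a ^ j * c ^ (n - j)) *
        ∫ x : ℝ, x ^ j * Real.exp (-α * x ^ 2) := by
    simp_rw [← integral_const_mul]
    rw [← integral_finset_sum _ (fun j _ =>
      ((aux_integrable_pow_mul_exp α hα j).const_mul _))]
    refine integral_congr_ae (Filter.Eventually.of_forall fun x => ?_)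
    dsimp only
    rw [add_pow, Finset.sum_mul]
    exact Finset.sum_congr rfl fun j _ => by ring
  rw [step1]
  set f : ℕ → ℝ := fun j => ((n.choose j : ℝ) * a ^ j * c ^ (n - j)) *
    ∫ x : ℝ, x ^ j * Real.exp (-α * x ^ 2) with hf
  have himg : (Finset.range (n / 2 + 1)).image (fun k => 2 * k) ⊆ Finset.range (n + 1) := by
    intro j hj
    obtain ⟨k, hk, rfl⟩ := Finset.mem_image.mp hj
    have hk' : k ≤ n / 2 := Nat.lt_succ_iff.mp (Finset.mem_range.mp hk)
    exact Finset.mem_range.mpr (by omega)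
  have hzero : ∀ j ∈ Finset.range (n + 1),
      j ∉ (Finset.range (n / 2 + 1)).image (fun k => 2 * k) → f j = 0 := by
    intro j hj hjn
    rcases Nat.even_or_odd j with he | ho
    · obtain ⟨k, rfl⟩ := he
      exfalso
      apply hjn
      refine Finset.mem_image.mpr ⟨k, Finset.mem_range.mpr ?_, by ring⟩
      have : k + k ≤ n := Nat.lt_succ_iff.mp (Finset.mem_range.mp hj)
      omega
    · obtain ⟨k, rfl⟩ := ho
      simp only [hf, aux_moment_odd α k, mul_zero]
  have hreindex : ∑ j ∈ Finset.range (n + 1), f j =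
      ∑ k ∈ Finset.range (n / 2 + 1), f (2 * k) := by
    rw [← Finset.sum_subset himg hzero, Finset.sum_image
      (fun x _ y _ h => by omega)]
  rw [hreindex, H2v, Finset.mul_sum, Finset.mul_sum]
  refine Finset.sum_congr rfl fun k hk => ?_
  have hkn : 2 * k ≤ n := by
    have hk' : k ≤ n / 2 := Nat.lt_succ_iff.mp (Finset.mem_range.mp hk)
    omega
  simp only [hf, aux_moment_even α hα k]
  have hchoose : ((n.choose (2 * k)) : ℝ) * (2 * k)! * (n - 2 * k)! = n ! := by
    exact_mod_cast congrArg (Nat.cast (R := ℝ))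
      (Nat.choose_mul_factorial_mul_factorial hkn)
  have hk1 : ((2 * k)! : ℝ) ≠ 0 := by positivity
  have hk2 : ((n - 2 * k)! : ℝ) ≠ 0 := by positivity
  have hk3 : (k ! : ℝ) ≠ 0 := by positivity
  have ha2 : a ^ (2 * k) = (a ^ 2) ^ k := by rw [← pow_mul]
  have hnc : ((n.choose (2 * k)) : ℝ) = n ! / ((2 * k)! * (n - 2 * k)!) := by
    field_simp
    linarith [hchoose]
  rw [hnc, ha2]
  have h4a : ((4 * α) ^ k : ℝ) ≠ 0 := by positivity
  field_simp
  ring_nf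
  rw [mul_assoc _ (α ^ k), ← mul_pow, mul_inv_cancel₀ hα.ne', mul_assoc, ← mul_pow]
  norm_num

theorem gaussian_integral_binomial_power (n : ℕ) (a b β α : ℝ) (hα : 0 < α) :
    ∫ x : ℝ, (a * x + b) ^ n * Real.exp (-α * x ^ 2 + β * x) =
      Real.sqrt (π / α) * Real.exp (β ^ 2 / (4 * α)) *
        H2v n (b + a * β / (2 * α)) (a ^ 2 / (4 * α)) := by
  set m : ℝ := β / (2 * α) with hm
  set c : ℝ := b + a * β / (2 * α) with hc
  have hαne : α ≠ 0 := ne_of_gt hα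
  have step1 : ∀ x : ℝ, Real.exp (-α * x ^ 2 + β * x) =
      Real.exp (β ^ 2 / (4 * α)) * Real.exp (-α * (x - m) ^ 2) := by
    intro x
    rw [← Real.exp_add]
    congr 1
    rw [hm]
    field_simp
    ring
  have step2 : (∫ x : ℝ, (a * x + b) ^ n * Real.exp (-α * x ^ 2 + β * x)) =
      Real.exp (β ^ 2 / (4 * α)) * ∫ x : ℝ, (a * x + b) ^ n * Real.exp (-α * (x - m) ^ 2) := by
    rw [← integral_const_mul]
    refine integral_congr_ae (Filter.Eventually.of_forall fun x => ?_)
    dsimp only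
    rw [step1 x]; ring
  have step3 : (∫ x : ℝ, (a * x + b) ^ n * Real.exp (-α * (x - m) ^ 2)) =
      ∫ x : ℝ, (a * x + c) ^ n * Real.exp (-α * x ^ 2) := by
    have : ∀ x : ℝ, (a * x + b) ^ n * Real.exp (-α * (x - m) ^ 2) =
        (fun y : ℝ => (a * y + c) ^ n * Real.exp (-α * y ^ 2)) (x - m) := by
      intro x
      simp only
      congr 2
      rw [hc, hm]
      field_simp
      ring
    simp_rw [this]
    exact integral_sub_right_eq_self (fun y : ℝ => (a * y + c) ^ n * Real.exp (-α * y ^ 2)) m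
  rw [step2, step3, aux_key n a c α hα]
  ring
end

section
/- For every nonnegative integer n, real u, and α > 0: ∫_{-∞}^{∞} L_n(x,u) exp(-α x²) dx = √(π/α) · Q_n^{(0)}(u, 1/(4α)), where L_n(x,y) = n! ∑_{k=0}^{n} (-1)^k x^k y^(n-k) / ((n-k)! (k!)²) is the two-variable Laguerre polynomial and Q_n^{(ν)}(x,y) = n! ∑_{k=0}^{⌊n/2⌋} x^(n-2k) y^k / ((n-2k)! k! Γ(2k+ν+1)). -/
open Real MeasureTheory Finset Nat

/-- `Γ(m + 1/2) = √π (2m)! / (4^m m!)`. -/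
lemma Gamma_nat_add_half' (m : ℕ) :
    Real.Gamma (m + 1/2) = Real.sqrt π * (2*m)! / (4^m * m !) := by
  induction m with
  | zero => simpa using Real.Gamma_one_half_eq
  | succ m ih =>
      have h1 : ((m+1 : ℕ) : ℝ) + 1/2 = (m + 1/2) + 1 := by push_cast; ring
      rw [h1, Real.Gamma_add_one (by positivity), ih]
      have h2 : (2*(m+1)) = (2*m+1) + 1 := by ring
      rw [h2, Nat.factorial_succ, Nat.factorial_succ, Nat.factorial_succ]
      have hm : (0:ℝ) < (m ! : ℝ) := by positivity
      push_cast
      field_simp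
      ring

lemma integrable_pow_gauss {α : ℝ} (hα : 0 < α) (k : ℕ) :
    Integrable (fun x : ℝ => x ^ k * Real.exp (-α * x ^ 2)) := by
  have := integrable_rpow_mul_exp_neg_mul_sq hα (s := k)
    (lt_of_lt_of_le (by norm_num) (Nat.cast_nonneg k))
  simpa [Real.rpow_natCast] using this

lemma pow_gauss_odd {α : ℝ} (k : ℕ) (hk : Odd k) :
    ∫ x : ℝ, x ^ k * Real.exp (-α * x ^ 2) = 0 := by
  have h := MeasureTheory.integral_neg_eq_self
    (fun x : ℝ => x ^ k * Real.exp (-α * x ^ 2)) (volume : Measure ℝ)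
  simp only [hk.neg_pow, neg_sq, neg_mul] at h ⊢
  rw [MeasureTheory.integral_neg] at h
  linarith

lemma pow_gauss_even {α : ℝ} (hα : 0 < α) (m : ℕ) :
    ∫ x : ℝ, x ^ (2*m) * Real.exp (-α * x ^ 2) =
      Real.sqrt π * (2*m)! / (4^m * m ! * α^m * Real.sqrt α) := by
  have h1 : ∫ x : ℝ, x ^ (2*m) * Real.exp (-α * x ^ 2)
      = 2 * ∫ x in Set.Ioi (0:ℝ), x ^ (2*m) * Real.exp (-α * x ^ 2) := by
    rw [← integral_comp_abs (f := fun x => x ^ (2*m) * Real.exp (-α * x ^ 2))]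
    congr 1; ext x
    rw [pow_mul, pow_mul, sq_abs]
  have h2 : ∫ x in Set.Ioi (0:ℝ), x ^ (2*m) * Real.exp (-α * x ^ 2)
      = α ^ (-((2*m:ℝ) + 1) / 2) * (1 / 2) * Real.Gamma (((2*m:ℝ) + 1) / 2) := by
    have := integral_rpow_mul_exp_neg_mul_rpow (p := 2) (q := (2*m:ℝ))
      (by norm_num) (lt_of_lt_of_le (by norm_num : (-1:ℝ) < 0) (by positivity : (0:ℝ) ≤ 2*m)) hα
    rw [← this]
    refine setIntegral_congr_fun measurableSet_Ioi (fun x hx => ?_)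
    rw [show ((2*m:ℝ)) = ((2*m : ℕ) : ℝ) by push_cast; ring, Real.rpow_natCast,
      show (2:ℝ) = ((2:ℕ):ℝ) by norm_num, Real.rpow_natCast]
  have h3 : ((2*m:ℝ) + 1) / 2 = m + 1/2 := by ring
  have h4 : α ^ (-((2*m:ℝ) + 1) / 2) = (α ^ m)⁻¹ * (Real.sqrt α)⁻¹ := by
    rw [show -((2*m:ℝ) + 1) / 2 = (-(m:ℝ)) + (-(1/2)) by ring,
      Real.rpow_add hα, Real.rpow_neg hα.le, Real.rpow_neg hα.le,
      Real.rpow_natCast]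
    congr 1
    rw [Real.sqrt_eq_rpow]
  rw [h1, h2, h3, h4, Gamma_nat_add_half']
  have h5 : (0:ℝ) < Real.sqrt α := Real.sqrt_pos.mpr hα
  have h6 : (0:ℝ) < (m ! : ℝ) := by positivity
  have h7 : (0:ℝ) < α ^ m := by positivity
  field_simp

lemma sum_range_even_support (n : ℕ) (f : ℕ → ℝ) (hf : ∀ k, Odd k → f k = 0) :
    ∑ k ∈ Finset.range (n+1), f k = ∑ m ∈ Finset.range (n/2+1), f (2*m) := by
  rw [← Finset.sum_filter_add_sum_filter_not (Finset.range (n+1)) (fun k => Even k)]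
  have h0 : ∑ k ∈ (Finset.range (n+1)).filter (fun k => ¬ Even k), f k = 0 :=
    Finset.sum_eq_zero (fun k hk =>
      hf k (Nat.not_even_iff_odd.mp (Finset.mem_filter.mp hk).2))
  rw [h0, add_zero]
  refine Finset.sum_nbij' (fun k => k/2) (fun m => 2*m) ?_ ?_ ?_ ?_ ?_
  · intro k hk
    obtain ⟨hk1, _⟩ := Finset.mem_filter.mp hk
    rw [Finset.mem_range] at hk1 ⊢
    omega
  · intro m hm
    rw [Finset.mem_range] at hm
    refine Finset.mem_filter.mpr ⟨Finset.mem_range.mpr (by omega), even_two_mul m⟩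
  · intro k hk
    obtain ⟨_, hk2⟩ := Finset.mem_filter.mp hk
    obtain ⟨r, hr⟩ := hk2
    omega
  · intro m _
    omega
  · intro k hk
    obtain ⟨_, hk2⟩ := Finset.mem_filter.mp hk
    obtain ⟨r, hr⟩ := hk2
    congr 1
    omega

/-- Two-variable Laguerre polynomial `L_n(x,y)`. -/
noncomputable def L2v (n : ℕ) (x y : ℝ) : ℝ :=
  (n ! : ℝ) * ∑ k ∈ Finset.range (n + 1),
    (-1 : ℝ) ^ k * x ^ k * y ^ (n - k) / (((n - k)! : ℝ) * ((k ! : ℝ)) ^ 2)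

/-- The polynomials `Q_n^{(ν)}(x,y)`. -/
noncomputable def Qpoly (ν : ℝ) (n : ℕ) (x y : ℝ) : ℝ :=
  (n ! : ℝ) * ∑ k ∈ Finset.range (n / 2 + 1),
    x ^ (n - 2 * k) * y ^ k /
      (((n - 2 * k)! : ℝ) * (k ! : ℝ) * Real.Gamma (2 * k + ν + 1))

theorem laguerre_gaussian_integral (n : ℕ) (u α : ℝ) (hα : 0 < α) :
    ∫ x : ℝ, L2v n x u * Real.exp (-α * x ^ 2) =
      Real.sqrt (π / α) * Qpoly 0 n u (1 / (4 * α)) := by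
  have hL : ∀ x : ℝ, L2v n x u * Real.exp (-α * x ^ 2)
      = ∑ k ∈ Finset.range (n+1),
          ((n ! : ℝ) * ((-1:ℝ)^k * u^(n-k) / (((n-k)! : ℝ) * ((k ! : ℝ))^2)))
            * (x^k * Real.exp (-α * x ^ 2)) := by
    intro x
    rw [L2v, Finset.mul_sum, Finset.sum_mul]
    refine Finset.sum_congr rfl (fun k _ => ?_)
    ring
  simp_rw [hL]
  rw [MeasureTheory.integral_finset_sum _
    (fun k _ => ((integrable_pow_gauss hα k).const_mul _))]
  simp_rw [MeasureTheory.integral_const_mul]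
  rw [sum_range_even_support n _ (fun k hk => by rw [pow_gauss_odd k hk, mul_zero])]
  rw [Qpoly, Finset.mul_sum, Finset.mul_sum]
  refine Finset.sum_congr rfl (fun m hm => ?_)
  rw [pow_gauss_even hα m]
  have hg : Real.Gamma (2 * (m:ℝ) + 0 + 1) = ((2*m)! : ℝ) := by
    rw [show 2 * (m:ℝ) + 0 + 1 = ((2*m : ℕ) : ℝ) + 1 by push_cast; ring,
      Real.Gamma_nat_eq_factorial]
  rw [hg]
  have hsq : Real.sqrt (π / α) = Real.sqrt π / Real.sqrt α :=
    Real.sqrt_div pi_pos.le α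
  rw [hsq]
  have e1 : ((-1:ℝ))^(2*m) = 1 := by
    rw [pow_mul]; norm_num
  rw [e1]
  have h5 : (0:ℝ) < Real.sqrt α := Real.sqrt_pos.mpr hα
  have h6 : (0:ℝ) < (m ! : ℝ) := by positivity
  have h7 : (0:ℝ) < α ^ m := by positivity
  have h8 : (0:ℝ) < ((2*m)! : ℝ) := by positivity
  have h9 : (0:ℝ) < ((n - 2*m)! : ℝ) := by positivity
  have h10 : (1 / (4*α))^m = 1 / (4^m * α^m) := by
    rw [div_pow, mul_pow]; norm_num
  rw [h10]
  field_simp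
end

section
/- For all nonnegative integers m, n, reals a, b, f, g, and α > 0: ∫_{-∞}^{∞} (a x + b)^m (f x + g)^n exp(-α x²) dx = √(π/α) · H_{m,n}(b, a²/(4α); g, f²/(4α) | a f/(2α)), where H_{m,n}(x,y;w,z|τ) = m! n! ∑_{k=0}^{min(m,n)} τ^k H_{m-k}(x,y) H_{n-k}(w,z) / ((m-k)! (n-k)! k!). -/
open Real MeasureTheory Finset Nat

/-- Two-index Hermite polynomial `H_{m,n}(x,y;w,z|τ)`. -/
noncomputable def H2idx (m n : ℕ) (x y w z τ : ℝ) : ℝ :=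
  (m ! : ℝ) * (n ! : ℝ) * ∑ k ∈ Finset.range (min m n + 1),
    τ ^ k * H2v (m - k) x y * H2v (n - k) w z /
      (((m - k)! : ℝ) * ((n - k)! : ℝ) * (k ! : ℝ))

open Filter

noncomputable def Ht (x y : ℝ) (n j : ℕ) : ℝ :=
  if 2 * j ≤ n then x ^ (n - 2 * j) * y ^ j * ((n ! : ℝ) / (((n - 2 * j)! : ℝ) * (j ! : ℝ))) else 0

lemma Ht_zero_of_gt {x y : ℝ} {n j : ℕ} (h : n < 2 * j) : Ht x y n j = 0 := by
  simp [Ht, Nat.not_le.mpr h]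

lemma H2v_eq_sum (n : ℕ) (x y : ℝ) : H2v n x y = ∑ j ∈ Finset.range (n + 1), Ht x y n j := by
  rw [H2v, Finset.mul_sum]
  rw [← Finset.sum_subset (Finset.range_subset_range.mpr (by omega : n / 2 + 1 ≤ n + 1))]
  · apply Finset.sum_congr rfl
    intro j hj
    simp only [Finset.mem_range] at hj
    have h2j : 2 * j ≤ n := by omega
    rw [Ht, if_pos h2j]
    ring
  · intro j _ hj
    simp only [Finset.mem_range, not_lt] at hj
    exact Ht_zero_of_gt (by omega)

lemma H2v_zero (x y : ℝ) : H2v 0 x y = 1 := by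
  simp [H2v]

lemma H2v_one (x y : ℝ) : H2v 1 x y = x := by
  simp [H2v]

lemma Ht_rec (x y : ℝ) (n j : ℕ) :
    Ht x y (n + 2) (j + 1) = x * Ht x y (n + 1) (j + 1) + 2 * y * (n + 1) * Ht x y n j := by
  simp only [Ht]
  by_cases h : 2 * j ≤ n
  · rw [if_pos (show 2 * (j + 1) ≤ n + 2 by omega), if_pos h]
    by_cases h2 : 2 * j + 1 ≤ n
    · -- general case, n - 2j = e + 1
      obtain ⟨e, rfl⟩ : ∃ e, n = 2 * j + (e + 1) := ⟨n - 2 * j - 1, by omega⟩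
      rw [if_pos (show 2 * (j + 1) ≤ 2 * j + (e + 1) + 1 by omega)]
      have e1 : 2 * j + (e + 1) + 2 - 2 * (j + 1) = e + 1 := by omega
      have e2 : 2 * j + (e + 1) + 1 - 2 * (j + 1) = e := by omega
      have e3 : 2 * j + (e + 1) - 2 * j = e + 1 := by omega
      rw [e1, e2, e3]
      have f1 : ((2 * j + (e + 1) + 2)! : ℝ)
          = (2 * j + e + 3) * (2 * j + e + 2) * ((2 * j + (e + 1))! : ℝ) := by
        rw [show 2 * j + (e + 1) + 2 = (2 * j + (e + 1) + 1) + 1 by ring,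
          show 2 * j + (e + 1) + 1 = (2 * j + (e + 1)) + 1 by ring]
        push_cast [Nat.factorial_succ]
        ring
      have f2 : ((2 * j + (e + 1) + 1)! : ℝ) = (2 * j + e + 2) * ((2 * j + (e + 1))! : ℝ) := by
        rw [show 2 * j + (e + 1) + 1 = (2 * j + (e + 1)) + 1 by ring]
        push_cast [Nat.factorial_succ]
        ring
      have f3 : ((e + 1)! : ℝ) = (e + 1) * (e ! : ℝ) := by
        push_cast [Nat.factorial_succ]; ring
      have f4 : ((j + 1)! : ℝ) = (j + 1) * (j ! : ℝ) := by
        push_cast [Nat.factorial_succ]; ring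
      rw [f1, f2, f3, f4]
      have hje : (0:ℝ) < (j ! : ℝ) := by positivity
      have hee : (0:ℝ) < (e ! : ℝ) := by positivity
      have hN : (0:ℝ) < ((2 * j + (e + 1))! : ℝ) := by positivity
      field_simp
      push_cast; ring
    · -- n = 2 * j
      obtain rfl : n = 2 * j := by omega
      rw [if_neg (show ¬ 2 * (j + 1) ≤ 2 * j + 1 by omega)]
      have e1 : 2 * j + 2 - 2 * (j + 1) = 0 := by omega
      have e2 : 2 * j - 2 * j = 0 := by omega
      rw [e1, e2]
      have f1 : ((2 * j + 2)! : ℝ) = (2 * j + 2) * (2 * j + 1) * ((2 * j)! : ℝ) := by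
        rw [show 2 * j + 2 = (2 * j + 1) + 1 by ring, show 2 * j + 1 = (2 * j) + 1 by ring]
        push_cast [Nat.factorial_succ]
        ring
      have f4 : ((j + 1)! : ℝ) = (j + 1) * (j ! : ℝ) := by
        push_cast [Nat.factorial_succ]; ring
      rw [f1, f4]
      have hje : (0:ℝ) < (j ! : ℝ) := by positivity
      have hN : (0:ℝ) < ((2 * j)! : ℝ) := by positivity
      field_simp
      push_cast; ring
  · rw [if_neg (show ¬ 2 * (j + 1) ≤ n + 2 by omega), if_neg (show ¬ 2 * (j + 1) ≤ n + 1 by omega),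
      if_neg h]
    ring

lemma Ht_self_zero (x y : ℝ) (n : ℕ) : Ht x y n 0 = x ^ n := by
  simp [Ht]
  rw [div_self (by positivity), mul_one]

lemma H2v_succ_succ (n : ℕ) (x y : ℝ) :
    H2v (n + 2) x y = x * H2v (n + 1) x y + 2 * y * (n + 1) * H2v n x y := by
  rw [H2v_eq_sum, H2v_eq_sum, H2v_eq_sum]
  rw [show n + 2 + 1 = (n + 2) + 1 by ring, Finset.sum_range_succ' (fun j => Ht x y (n + 2) j)]
  rw [show n + 1 + 1 = (n + 1) + 1 by ring, Finset.sum_range_succ' (fun j => Ht x y (n + 1) j)]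
  have hshift : ∑ j ∈ Finset.range (n + 2), Ht x y (n + 2) (j + 1)
      = ∑ j ∈ Finset.range (n + 2), (x * Ht x y (n + 1) (j + 1) + 2 * y * (n + 1) * Ht x y n j) :=
    Finset.sum_congr rfl (fun j _ => Ht_rec x y n j)
  rw [hshift, Finset.sum_add_distrib, ← Finset.mul_sum, ← Finset.mul_sum]
  rw [Finset.sum_range_succ (fun j => Ht x y (n + 1) (j + 1)) (n + 1),
    Ht_zero_of_gt (show n + 1 < 2 * (n + 1 + 1) by omega),
    Finset.sum_range_succ (fun j => Ht x y n j) (n + 1),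
    Ht_zero_of_gt (show n < 2 * (n + 1) by omega)]
  simp only [add_zero, Ht_self_zero]
  ring

lemma H2v_succ (n : ℕ) (x y : ℝ) :
    H2v (n + 1) x y = x * H2v n x y + 2 * y * n * H2v (n - 1) x y := by
  cases n with
  | zero => simp [H2v_one, H2v_zero]
  | succ k => rw [H2v_succ_succ]; simp only [Nat.add_sub_cancel]; push_cast; ring


noncomputable def Gt (x y w z τ : ℝ) (m n k : ℕ) : ℝ :=
  if k ≤ m ∧ k ≤ n then
    τ ^ k * H2v (m - k) x y * H2v (n - k) w z *
      (((m ! : ℝ) * (n ! : ℝ)) / (((m - k)! : ℝ) * ((n - k)! : ℝ) * (k ! : ℝ)))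
  else 0

lemma H2idx_eq_sum (m n M : ℕ) (hM : min m n < M) (x y w z τ : ℝ) :
    H2idx m n x y w z τ = ∑ k ∈ Finset.range M, Gt x y w z τ m n k := by
  rw [H2idx, Finset.mul_sum,
    ← Finset.sum_subset (Finset.range_subset_range.mpr (by omega : min m n + 1 ≤ M))]
  · apply Finset.sum_congr rfl
    intro k hk
    simp only [Finset.mem_range] at hk
    rw [Gt, if_pos ⟨by omega, by omega⟩]
    ring
  · intro k _ hk
    simp only [Finset.mem_range, not_lt] at hk
    rw [Gt, if_neg (by omega)]

lemma H2idx_symm (m n : ℕ) (x y w z τ : ℝ) :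
    H2idx m n x y w z τ = H2idx n m w z x y τ := by
  rw [H2idx, H2idx, min_comm]
  rw [Finset.mul_sum, Finset.mul_sum]
  exact Finset.sum_congr rfl (fun k _ => by ring)

lemma H2idx_zero_zero (x y w z τ : ℝ) : H2idx 0 0 x y w z τ = 1 := by
  simp [H2idx, H2v_zero]

lemma Gt_boundary (x y w z τ : ℝ) (m n : ℕ) :
    Gt x y w z τ (m + 1) n 0 = x * Gt x y w z τ m n 0 + 2 * y * m * Gt x y w z τ (m - 1) n 0 := by
  simp only [Gt, if_pos (⟨Nat.zero_le _, Nat.zero_le _⟩ : 0 ≤ m + 1 ∧ 0 ≤ n),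
    if_pos (⟨Nat.zero_le _, Nat.zero_le _⟩ : 0 ≤ m ∧ 0 ≤ n),
    if_pos (⟨Nat.zero_le _, Nat.zero_le _⟩ : 0 ≤ m - 1 ∧ 0 ≤ n), Nat.sub_zero, pow_zero,
    Nat.factorial_zero]
  rw [H2v_succ m x y]
  have h1 : (0:ℝ) < ((m + 1)! : ℝ) := by positivity
  have h2 : (0:ℝ) < ((n)! : ℝ) := by positivity
  have h3 : (0:ℝ) < ((m)! : ℝ) := by positivity
  have h4 : (0:ℝ) < ((m - 1)! : ℝ) := by positivity
  field_simp


lemma factCastR (a : ℕ) : ((a + 1)! : ℝ) = (a + 1) * (a ! : ℝ) := by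
  push_cast [Nat.factorial_succ]; ring

lemma Gt_rec (x y w z τ : ℝ) (m n k : ℕ) :
    Gt x y w z τ (m + 1) n (k + 1) =
      x * Gt x y w z τ m n (k + 1) + 2 * y * m * Gt x y w z τ (m - 1) n (k + 1) +
        τ * n * Gt x y w z τ m (n - 1) k := by
  simp only [Gt]
  by_cases h : k ≤ m ∧ k + 1 ≤ n
  · obtain ⟨hkm, hkn⟩ := h
    obtain ⟨q, rfl⟩ : ∃ q, n = k + 1 + q := ⟨n - (k + 1), by omega⟩
    rw [if_pos (show k + 1 ≤ m + 1 ∧ k + 1 ≤ k + 1 + q by omega),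
      if_pos (show k ≤ m ∧ k ≤ k + 1 + q - 1 by omega)]
    rcases Nat.lt_or_ge (k + 1) m with hlt | hge
    · -- m ≥ k + 2
      obtain ⟨p, rfl⟩ : ∃ p, m = k + 2 + p := ⟨m - (k + 2), by omega⟩
      rw [if_pos (show k + 1 ≤ k + 2 + p ∧ k + 1 ≤ k + 1 + q by omega),
        if_pos (show k + 1 ≤ k + 2 + p - 1 ∧ k + 1 ≤ k + 1 + q by omega)]
      have FM : ((k + 2 + p + 1)! : ℝ) = (↑k + 3 + ↑p) * ((k + 2 + p)! : ℝ) := by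
        rw [Nat.factorial_succ]; push_cast; ring
      have Fm : ((k + 2 + p)! : ℝ) = (↑k + 2 + ↑p) * ((k + 1 + p)! : ℝ) := by
        have h : k + 2 + p = k + 1 + p + 1 := by omega
        rw [h, Nat.factorial_succ]; push_cast; ring
      have Fn : ((k + 1 + q)! : ℝ) = (↑k + 1 + ↑q) * ((k + q)! : ℝ) := by
        have h : k + 1 + q = k + q + 1 := by omega
        rw [h, Nat.factorial_succ]; push_cast; ring
      have F4 : ((p + 2)! : ℝ) = (↑p + 2) * (↑p + 1) * ((p)! : ℝ) := by
        rw [show p + 2 = p + 1 + 1 from rfl, Nat.factorial_succ, Nat.factorial_succ]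
        push_cast; ring
      have F5 : ((p + 1)! : ℝ) = (↑p + 1) * ((p)! : ℝ) := by
        rw [Nat.factorial_succ]; push_cast; ring
      have F6 : ((k + 1)! : ℝ) = (↑k + 1) * ((k)! : ℝ) := by
        rw [Nat.factorial_succ]; push_cast; ring
      simp only [show k + 2 + p + 1 - (k + 1) = p + 2 from by omega,
        show k + 1 + q - (k + 1) = q from by omega,
        show k + 2 + p - (k + 1) = p + 1 from by omega,
        show k + 2 + p - 1 - (k + 1) = p from by omega,
        show k + 2 + p - 1 = k + 1 + p from by omega,
        show k + 1 + p - (k + 1) = p from by omega,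
        show k + 1 + q - 1 = k + q from by omega,
        show k + 2 + p - k = p + 2 from by omega,
        show k + q - k = q from by omega,
        show k + 1 + q - 1 - k = q from by omega]
      rw [H2v_succ_succ p x y, FM, Fm, Fn, F4, F5, F6]
      have h1 : (0:ℝ) < ((k + 1 + p)! : ℝ) := by positivity
      have h2 : (0:ℝ) < ((k + q)! : ℝ) := by positivity
      have h3 : (0:ℝ) < ((p)! : ℝ) := by positivity
      have h4 : (0:ℝ) < ((q)! : ℝ) := by positivity
      have h5 : (0:ℝ) < ((k)! : ℝ) := by positivity
      field_simp
      push_cast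
      ring
    · rcases Nat.eq_or_lt_of_le hge with hq | hlt2
      · -- m = k + 1
        obtain rfl := hq
        rw [if_pos (show k + 1 ≤ k + 1 ∧ k + 1 ≤ k + 1 + q by omega),
          if_neg (show ¬(k + 1 ≤ k + 1 - 1 ∧ k + 1 ≤ k + 1 + q) by omega)]
        have FM : ((k + 1 + 1)! : ℝ) = (↑k + 2) * ((k + 1)! : ℝ) := by
          rw [Nat.factorial_succ]; push_cast; ring
        have Fn : ((k + 1 + q)! : ℝ) = (↑k + 1 + ↑q) * ((k + q)! : ℝ) := by
          have h : k + 1 + q = k + q + 1 := by omega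
          rw [h, Nat.factorial_succ]; push_cast; ring
        have F6 : ((k + 1)! : ℝ) = (↑k + 1) * ((k)! : ℝ) := by
          rw [Nat.factorial_succ]; push_cast; ring
        simp only [show k + 1 + 1 - (k + 1) = 1 from by omega,
          show k + 1 + q - (k + 1) = q from by omega,
          show k + 1 - (k + 1) = 0 from by omega,
          show k + 1 - k = 1 from by omega,
          show k + 1 + q - 1 = k + q from by omega,
          show k + q - k = q from by omega,
          show k + 1 + q - 1 - k = q from by omega]
        rw [H2v_one, H2v_zero, FM, Fn, F6]
        simp only [Nat.factorial_one, Nat.factorial_zero, Nat.cast_one]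
        have h2 : (0:ℝ) < ((k + q)! : ℝ) := by positivity
        have h4 : (0:ℝ) < ((q)! : ℝ) := by positivity
        have h5 : (0:ℝ) < ((k)! : ℝ) := by positivity
        field_simp
        push_cast
        ring
      · -- m = k
        obtain rfl : k = m := by omega
        rw [if_neg (show ¬(k + 1 ≤ k ∧ k + 1 ≤ k + 1 + q) by omega),
          if_neg (show ¬(k + 1 ≤ k - 1 ∧ k + 1 ≤ k + 1 + q) by omega)]
        have Fn : ((k + 1 + q)! : ℝ) = (↑k + 1 + ↑q) * ((k + q)! : ℝ) := by
          have h : k + 1 + q = k + q + 1 := by omega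
          rw [h, Nat.factorial_succ]; push_cast; ring
        have F6 : ((k + 1)! : ℝ) = (↑k + 1) * ((k)! : ℝ) := by
          rw [Nat.factorial_succ]; push_cast; ring
        simp only [show k + 1 - (k + 1) = 0 from by omega,
          show k + 1 + q - (k + 1) = q from by omega,
          show k - k = 0 from by omega,
          show k + 1 + q - 1 = k + q from by omega,
          show k + q - k = q from by omega,
          show k + 1 + q - 1 - k = q from by omega]
        rw [H2v_zero, Fn, F6]
        simp only [Nat.factorial_zero, Nat.cast_one]
        have h2 : (0:ℝ) < ((k + q)! : ℝ) := by positivity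
        have h4 : (0:ℝ) < ((q)! : ℝ) := by positivity
        have h5 : (0:ℝ) < ((k)! : ℝ) := by positivity
        field_simp
        push_cast
        ring
  · rw [if_neg (show ¬(k + 1 ≤ m + 1 ∧ k + 1 ≤ n) by omega),
      if_neg (show ¬(k + 1 ≤ m ∧ k + 1 ≤ n) by omega),
      if_neg (show ¬(k + 1 ≤ m - 1 ∧ k + 1 ≤ n) by omega)]
    rcases Nat.eq_zero_or_pos n with rfl | hn
    · norm_num
    · rw [if_neg (show ¬(k ≤ m ∧ k ≤ n - 1) by omega)]
      ring

lemma H2idx_succ_left (m n : ℕ) (x y w z τ : ℝ) :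
    H2idx (m + 1) n x y w z τ =
      x * H2idx m n x y w z τ + 2 * y * m * H2idx (m - 1) n x y w z τ +
        τ * n * H2idx m (n - 1) x y w z τ := by
  have hM : min m n + 2 ≤ m + n + 2 := by omega
  rw [H2idx_eq_sum (m + 1) n (m + n + 2 + 1) (by omega),
    H2idx_eq_sum m n (m + n + 2 + 1) (by omega),
    H2idx_eq_sum (m - 1) n (m + n + 2 + 1) (by omega),
    H2idx_eq_sum m (n - 1) (m + n + 2) (by omega)]
  rw [Finset.sum_range_succ' (fun k => Gt x y w z τ (m + 1) n k) (m + n + 2),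
    Finset.sum_range_succ' (fun k => Gt x y w z τ m n k) (m + n + 2),
    Finset.sum_range_succ' (fun k => Gt x y w z τ (m - 1) n k) (m + n + 2)]
  rw [Finset.sum_congr rfl (fun k _ => Gt_rec x y w z τ m n k)]
  rw [Finset.sum_add_distrib, Finset.sum_add_distrib, ← Finset.mul_sum, ← Finset.mul_sum,
    ← Finset.mul_sum, Gt_boundary]
  ring

lemma H2idx_succ_right (m n : ℕ) (x y w z τ : ℝ) :
    H2idx m (n + 1) x y w z τ =
      w * H2idx m n x y w z τ + 2 * z * n * H2idx m (n - 1) x y w z τ +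
        τ * m * H2idx (m - 1) n x y w z τ := by
  rw [H2idx_symm m (n + 1), H2idx_succ_left n m w z x y τ, H2idx_symm n m,
    H2idx_symm (n - 1) m, H2idx_symm n (m - 1)]


lemma integrable_xpow_gauss {α : ℝ} (hα : 0 < α) (k : ℕ) :
    Integrable fun x : ℝ => x ^ k * Real.exp (-α * x ^ 2) := by
  have hs : (-1 : ℝ) < (k : ℝ) := by
    have : (0:ℝ) ≤ k := Nat.cast_nonneg k
    linarith
  simpa [Real.rpow_natCast] using integrable_rpow_mul_exp_neg_mul_sq hα hs

lemma tendsto_xpow_gauss {α : ℝ} (hα : 0 < α) (k : ℕ) :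
    Tendsto (fun x : ℝ => x ^ k * Real.exp (-α * x ^ 2)) atTop (nhds 0) := by
  have h0 : Tendsto (fun x : ℝ => (1/2 : ℝ) * x) atTop atTop :=
    tendsto_id.const_mul_atTop (by norm_num)
  have h1 : Tendsto (fun x : ℝ => Real.exp (-(1/2) * x)) atTop (nhds 0) := by
    have := tendsto_exp_neg_atTop_nhds_zero.comp h0
    simpa [Function.comp_def, neg_mul] using this
  have h := (rpow_mul_exp_neg_mul_sq_isLittleO_exp_neg hα (k : ℝ)).trans_tendsto h1
  simpa [Real.rpow_natCast] using h

lemma integrable_F (k m n : ℕ) (a b f g α : ℝ) (hα : 0 < α) :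
    Integrable (fun x : ℝ =>
      x ^ k * ((a * x + b) ^ m * (f * x + g) ^ n) * Real.exp (-α * x ^ 2)) := by
  have key : (fun x : ℝ => x ^ k * ((a * x + b) ^ m * (f * x + g) ^ n) * Real.exp (-α * x ^ 2))
      = fun x => ∑ i ∈ Finset.range (m + 1), ∑ j ∈ Finset.range (n + 1),
          (a ^ i * b ^ (m - i) * (m.choose i) * (f ^ j * g ^ (n - j) * (n.choose j))) *
            (x ^ (k + i + j) * Real.exp (-α * x ^ 2)) := by
    funext x
    rw [add_pow, add_pow]
    simp only [Finset.sum_mul_sum, Finset.mul_sum, Finset.sum_mul]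
    rw [Finset.sum_comm]
    refine Finset.sum_congr rfl fun i _ => Finset.sum_congr rfl fun j _ => ?_
    rw [mul_pow, mul_pow, pow_add, pow_add]
    ring
  rw [key]
  apply integrable_finset_sum
  intro i _
  apply integrable_finset_sum
  intro j _
  exact (integrable_xpow_gauss hα (k + i + j)).const_mul _

lemma tendsto_F_atTop (m n : ℕ) (a b f g α : ℝ) (hα : 0 < α) :
    Tendsto (fun x : ℝ => (a * x + b) ^ m * (f * x + g) ^ n * Real.exp (-α * x ^ 2))
      atTop (nhds 0) := by
  have hb := (tendsto_xpow_gauss hα (m + n)).const_mul ((|a| + |b|) ^ m * (|f| + |g|) ^ n)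
  rw [mul_zero] at hb
  apply squeeze_zero_norm' ?_ hb
  filter_upwards [eventually_ge_atTop (1 : ℝ)] with x hx
  have hx0 : (0 : ℝ) ≤ x := by linarith
  have h1 : |a * x + b| ≤ (|a| + |b|) * x := by
    calc |a * x + b| ≤ |a * x| + |b| := abs_add_le _ _
    _ = |a| * x + |b| := by rw [abs_mul, abs_of_nonneg hx0]
    _ ≤ |a| * x + |b| * x := by nlinarith [abs_nonneg b]
    _ = (|a| + |b|) * x := by ring
  have h2 : |f * x + g| ≤ (|f| + |g|) * x := by
    calc |f * x + g| ≤ |f * x| + |g| := abs_add_le _ _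
    _ = |f| * x + |g| := by rw [abs_mul, abs_of_nonneg hx0]
    _ ≤ |f| * x + |g| * x := by nlinarith [abs_nonneg g]
    _ = (|f| + |g|) * x := by ring
  calc ‖(a * x + b) ^ m * (f * x + g) ^ n * Real.exp (-α * x ^ 2)‖
      = |a * x + b| ^ m * |f * x + g| ^ n * Real.exp (-α * x ^ 2) := by
        rw [Real.norm_eq_abs, abs_mul, abs_mul, abs_pow, abs_pow, Real.abs_exp]
    _ ≤ ((|a| + |b|) * x) ^ m * ((|f| + |g|) * x) ^ n * Real.exp (-α * x ^ 2) := by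
        gcongr <;> positivity
    _ = (|a| + |b|) ^ m * (|f| + |g|) ^ n * (x ^ (m + n) * Real.exp (-α * x ^ 2)) := by
        rw [mul_pow, mul_pow, pow_add]; ring

lemma tendsto_F_atBot (m n : ℕ) (a b f g α : ℝ) (hα : 0 < α) :
    Tendsto (fun x : ℝ => (a * x + b) ^ m * (f * x + g) ^ n * Real.exp (-α * x ^ 2))
      atBot (nhds 0) := by
  have h := (tendsto_F_atTop m n (-a) b (-f) g α hα).comp tendsto_neg_atBot_atTop
  apply h.congr
  intro x
  simp only [Function.comp_apply]
  ring_nf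

lemma hasDerivAt_F (m n : ℕ) (a b f g α : ℝ) (x : ℝ) :
    HasDerivAt (fun t : ℝ => (a * t + b) ^ m * (f * t + g) ^ n * Real.exp (-α * t ^ 2))
      ((a * m * (a * x + b) ^ (m - 1) * (f * x + g) ^ n
        + f * n * (a * x + b) ^ m * (f * x + g) ^ (n - 1)
        - 2 * α * x * ((a * x + b) ^ m * (f * x + g) ^ n)) * Real.exp (-α * x ^ 2)) x := by
  have h1 : HasDerivAt (fun t : ℝ => a * t + b) a x := by
    simpa using ((hasDerivAt_id x).const_mul a).add_const b
  have h2 : HasDerivAt (fun t : ℝ => f * t + g) f x := by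
    simpa using ((hasDerivAt_id x).const_mul f).add_const g
  have h1p := h1.pow m
  have h2p := h2.pow n
  have h3 : HasDerivAt (fun t : ℝ => Real.exp (-α * t ^ 2)) (Real.exp (-α * x ^ 2) * (-α * (2 * x))) x := by
    have hq : HasDerivAt (fun t : ℝ => -α * t ^ 2) (-α * (2 * x)) x := by
      simpa using (hasDerivAt_pow 2 x).const_mul (-α)
    exact hq.exp
  have h := (h1p.mul h2p).mul h3
  refine h.congr_deriv ?_
  simp only [Pi.mul_apply, Pi.pow_apply]
  ring

lemma integral_deriv_zero (m n : ℕ) (a b f g α : ℝ) (hα : 0 < α) :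
    ∫ x : ℝ, (a * m * (a * x + b) ^ (m - 1) * (f * x + g) ^ n
      + f * n * (a * x + b) ^ m * (f * x + g) ^ (n - 1)
      - 2 * α * x * ((a * x + b) ^ m * (f * x + g) ^ n)) * Real.exp (-α * x ^ 2) = 0 := by
  set F : ℝ → ℝ := fun x => (a * x + b) ^ m * (f * x + g) ^ n * Real.exp (-α * x ^ 2) with hF
  set F' : ℝ → ℝ := fun x => (a * m * (a * x + b) ^ (m - 1) * (f * x + g) ^ n
      + f * n * (a * x + b) ^ m * (f * x + g) ^ (n - 1)
      - 2 * α * x * ((a * x + b) ^ m * (f * x + g) ^ n)) * Real.exp (-α * x ^ 2) with hF'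
  have i1 := (integrable_F 0 (m - 1) n a b f g α hα).const_mul (a * m)
  have i2 := (integrable_F 0 m (n - 1) a b f g α hα).const_mul (f * n)
  have i3 := (integrable_F 1 m n a b f g α hα).const_mul (2 * α)
  have hint : Integrable F' := by
    refine ((i1.add i2).sub i3).congr (Filter.Eventually.of_forall fun x => ?_)
    simp only [hF', Pi.add_apply, Pi.sub_apply, pow_zero, pow_one]
    ring
  have hderiv : ∀ x : ℝ, HasDerivAt F (F' x) x := fun x => hasDerivAt_F m n a b f g α x
  have htop : ∫ x in Set.Ioi (0:ℝ), F' x = 0 - F 0 :=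
    integral_Ioi_of_hasDerivAt_of_tendsto' (fun x _ => hderiv x) hint.integrableOn
      (tendsto_F_atTop m n a b f g α hα)
  have hbot : ∫ x in Set.Iic (0:ℝ), F' x = F 0 - 0 :=
    integral_Iic_of_hasDerivAt_of_tendsto' (fun x _ => hderiv x) hint.integrableOn
      (tendsto_F_atBot m n a b f g α hα)
  have hsum := intervalIntegral.integral_Iic_add_Ioi (b := (0:ℝ)) (f := F') hint.integrableOn hint.integrableOn
  rw [htop, hbot] at hsum
  rw [← hsum]
  ring

lemma moment_rec (m n : ℕ) (a b f g α : ℝ) (hα : 0 < α) :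
    ∫ x : ℝ, x * ((a * x + b) ^ m * (f * x + g) ^ n) * Real.exp (-α * x ^ 2)
      = (a * m * (∫ x : ℝ, (a * x + b) ^ (m - 1) * (f * x + g) ^ n * Real.exp (-α * x ^ 2))
        + f * n * (∫ x : ℝ, (a * x + b) ^ m * (f * x + g) ^ (n - 1) * Real.exp (-α * x ^ 2)))
        / (2 * α) := by
  have Ia : Integrable (fun x : ℝ =>
      (a * x + b) ^ (m - 1) * (f * x + g) ^ n * Real.exp (-α * x ^ 2)) := by
    simpa using integrable_F 0 (m - 1) n a b f g α hα
  have Ib : Integrable (fun x : ℝ =>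
      (a * x + b) ^ m * (f * x + g) ^ (n - 1) * Real.exp (-α * x ^ 2)) := by
    simpa using integrable_F 0 m (n - 1) a b f g α hα
  have Ic : Integrable (fun x : ℝ =>
      x * ((a * x + b) ^ m * (f * x + g) ^ n) * Real.exp (-α * x ^ 2)) := by
    simpa using integrable_F 1 m n a b f g α hα
  have h0 := integral_deriv_zero m n a b f g α hα
  rw [show (fun x : ℝ => (a * m * (a * x + b) ^ (m - 1) * (f * x + g) ^ n
      + f * n * (a * x + b) ^ m * (f * x + g) ^ (n - 1)
      - 2 * α * x * ((a * x + b) ^ m * (f * x + g) ^ n)) * Real.exp (-α * x ^ 2))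
    = fun x : ℝ => (a * ↑m * ((a * x + b) ^ (m - 1) * (f * x + g) ^ n * Real.exp (-α * x ^ 2))
      + f * ↑n * ((a * x + b) ^ m * (f * x + g) ^ (n - 1) * Real.exp (-α * x ^ 2)))
      - 2 * α * (x * ((a * x + b) ^ m * (f * x + g) ^ n) * Real.exp (-α * x ^ 2))
    from funext fun x => by ring] at h0
  have IAB : Integrable (fun x : ℝ =>
      a * ↑m * ((a * x + b) ^ (m - 1) * (f * x + g) ^ n * Real.exp (-α * x ^ 2))
        + f * ↑n * ((a * x + b) ^ m * (f * x + g) ^ (n - 1) * Real.exp (-α * x ^ 2))) := by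
    refine ((Ia.const_mul (a * (m:ℝ))).add (Ib.const_mul (f * (n:ℝ)))).congr
      (Filter.Eventually.of_forall fun x => ?_)
    simp [Pi.add_apply]
  rw [integral_sub IAB (Ic.const_mul _),
    integral_add (Ia.const_mul _) (Ib.const_mul _), integral_const_mul, integral_const_mul,
    integral_const_mul] at h0
  have h2α : (2 * α) ≠ 0 := by positivity
  rw [eq_div_iff h2α]
  linarith [h0]

lemma I_succ_left (m n : ℕ) (a b f g α : ℝ) (hα : 0 < α) :
    ∫ x : ℝ, (a * x + b) ^ (m + 1) * (f * x + g) ^ n * Real.exp (-α * x ^ 2)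
      = b * (∫ x : ℝ, (a * x + b) ^ m * (f * x + g) ^ n * Real.exp (-α * x ^ 2))
        + 2 * (a ^ 2 / (4 * α)) * m *
          (∫ x : ℝ, (a * x + b) ^ (m - 1) * (f * x + g) ^ n * Real.exp (-α * x ^ 2))
        + (a * f / (2 * α)) * n *
          (∫ x : ℝ, (a * x + b) ^ m * (f * x + g) ^ (n - 1) * Real.exp (-α * x ^ 2)) := by
  have I0 : Integrable (fun x : ℝ =>
      (a * x + b) ^ m * (f * x + g) ^ n * Real.exp (-α * x ^ 2)) := by
    simpa using integrable_F 0 m n a b f g α hα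
  have Ic : Integrable (fun x : ℝ =>
      x * ((a * x + b) ^ m * (f * x + g) ^ n) * Real.exp (-α * x ^ 2)) := by
    simpa using integrable_F 1 m n a b f g α hα
  rw [show (fun x : ℝ => (a * x + b) ^ (m + 1) * (f * x + g) ^ n * Real.exp (-α * x ^ 2))
      = fun x : ℝ => a * (x * ((a * x + b) ^ m * (f * x + g) ^ n) * Real.exp (-α * x ^ 2))
        + b * ((a * x + b) ^ m * (f * x + g) ^ n * Real.exp (-α * x ^ 2))
    from funext fun x => by ring]
  rw [integral_add (Ic.const_mul a) (I0.const_mul b), integral_const_mul, integral_const_mul,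
    moment_rec m n a b f g α hα]
  have h2α : (2 * α) ≠ 0 := by positivity
  generalize (∫ x : ℝ, (a * x + b) ^ (m - 1) * (f * x + g) ^ n * Real.exp (-α * x ^ 2)) = A
  generalize (∫ x : ℝ, (a * x + b) ^ m * (f * x + g) ^ (n - 1) * Real.exp (-α * x ^ 2)) = B
  generalize (∫ x : ℝ, (a * x + b) ^ m * (f * x + g) ^ n * Real.exp (-α * x ^ 2)) = C
  field_simp
  ring


theorem gaussian_integral_two_binomials (m n : ℕ) (a b f g α : ℝ) (hα : 0 < α) :
    ∫ x : ℝ, (a * x + b) ^ m * (f * x + g) ^ n * Real.exp (-α * x ^ 2) =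
      Real.sqrt (π / α) *
        H2idx m n b (a ^ 2 / (4 * α)) g (f ^ 2 / (4 * α)) (a * f / (2 * α)) := by
  suffices H : ∀ s m n : ℕ, ∀ a b f g α : ℝ, 0 < α → m + n ≤ s →
      (∫ x : ℝ, (a * x + b) ^ m * (f * x + g) ^ n * Real.exp (-α * x ^ 2) =
        Real.sqrt (π / α) *
          H2idx m n b (a ^ 2 / (4 * α)) g (f ^ 2 / (4 * α)) (a * f / (2 * α))) by
    exact H (m + n) m n a b f g α hα le_rfl
  intro s
  induction s with
  | zero =>
    intro m n a b f g α hα hmn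
    obtain rfl : m = 0 := by omega
    obtain rfl : n = 0 := by omega
    simp only [pow_zero, one_mul, H2idx_zero_zero, mul_one]
    exact integral_gaussian α
  | succ s ih =>
    intro m n a b f g α hα hmn
    have hsw : ∀ (p q : ℕ),
        (∫ x : ℝ, (a * x + b) ^ p * (f * x + g) ^ q * Real.exp (-α * x ^ 2))
          = ∫ x : ℝ, (f * x + g) ^ q * (a * x + b) ^ p * Real.exp (-α * x ^ 2) := by
      intro p q
      rw [show (fun x : ℝ => (a * x + b) ^ p * (f * x + g) ^ q * Real.exp (-α * x ^ 2))
        = fun x : ℝ => (f * x + g) ^ q * (a * x + b) ^ p * Real.exp (-α * x ^ 2)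
        from funext fun x => by ring]
    cases m with
    | succ m' =>
      rw [I_succ_left m' n a b f g α hα, ih m' n a b f g α hα (by omega),
        ih (m' - 1) n a b f g α hα (by omega), ih m' (n - 1) a b f g α hα (by omega),
        H2idx_succ_left m' n b (a ^ 2 / (4 * α)) g (f ^ 2 / (4 * α)) (a * f / (2 * α))]
      ring
    | zero =>
      cases n with
      | zero =>
        simp only [pow_zero, one_mul, H2idx_zero_zero, mul_one]
        exact integral_gaussian α
      | succ n' =>
        rw [hsw 0 (n' + 1), I_succ_left n' 0 f g a b α hα, ← hsw 0 n', ← hsw 0 (n' - 1)]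
        rw [ih 0 n' a b f g α hα (by omega), ih 0 (n' - 1) a b f g α hα (by omega),
          H2idx_succ_right 0 n' b (a ^ 2 / (4 * α)) g (f ^ 2 / (4 * α)) (a * f / (2 * α))]
        push_cast
        ring
end

section
/- For every real α ≥ 0, real x, and real t, the generating function identity ∑_{n=0}^∞ (t^n/n!) Q_n^{(α)}(x,y) = exp(x t) · W_α(y t² | 2) holds, where W_α(x|2) = ∑_{k=0}^∞ x^k / (k! Γ(2k+α+1)) is the second-order Bessel-Wright function. -/
set_option maxHeartbeats 1000000

open Real MeasureTheory Finset Nat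

/-- Second-order Bessel-Wright function . -/
noncomputable def BesselWright2 (α x : ℝ) : ℝ :=
  ∑' k : ℕ, x ^ k / ((k ! : ℝ) * Real.Gamma (2 * k + α + 1))

private lemma gamma_ge (a : ℝ) (ha : 1 ≤ a) (n : ℕ) :
    Real.Gamma a ≤ Real.Gamma (a + n) := by
  induction n with
  | zero => simp
  | succ n ih =>
      have h1 : (0:ℝ) < a + n := by positivity
      have : Real.Gamma (a + (n+1 : ℕ)) = (a + n) * Real.Gamma (a + n) := by
        push_cast
        rw [show a + (n + 1 : ℝ) = (a + n) + 1 by ring, Real.Gamma_add_one (by positivity)]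
      rw [this]
      calc Real.Gamma a ≤ Real.Gamma (a + n) := ih
        _ ≤ (a + n) * Real.Gamma (a + n) := by
            nlinarith [Real.Gamma_pos_of_pos h1, ha, Nat.cast_nonneg (α := ℝ) n]

private lemma summable_w (α : ℝ) (hα : 0 ≤ α) (z : ℝ) :
    Summable (fun k : ℕ => z ^ k / ((k ! : ℝ) * Real.Gamma (2 * k + α + 1))) := by
  have hG0 : 0 < Real.Gamma (α + 1) := Real.Gamma_pos_of_pos (by linarith)
  apply Summable.of_abs
  refine Summable.of_nonneg_of_le (fun k => abs_nonneg _) (fun k => ?_)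
    (((Real.summable_pow_div_factorial |z|).div_const (Real.Gamma (α + 1))))
  have hge : Real.Gamma (α + 1) ≤ Real.Gamma (2 * k + α + 1) := by
    have := gamma_ge (α + 1) (by linarith) (2 * k)
    rw [show (α:ℝ) + 1 + (2*k : ℕ) = 2 * k + α + 1 by push_cast; ring] at this
    exact this
  have hGk : 0 < Real.Gamma (2 * k + α + 1) := lt_of_lt_of_le hG0 hge
  have hk : (0:ℝ) < k ! := by positivity
  have hden : (0:ℝ) < (k ! : ℝ) * Real.Gamma (2 * k + α + 1) := mul_pos hk hGk
  rw [abs_div, abs_pow, abs_of_pos hden, div_div]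
  gcongr

private lemma hasSum_w (α : ℝ) (hα : 0 ≤ α) (z : ℝ) :
    HasSum (fun k : ℕ => z ^ k / ((k ! : ℝ) * Real.Gamma (2 * k + α + 1)))
      (BesselWright2 α z) := (summable_w α hα z).hasSum

private lemma hasSum_exp' (u : ℝ) : HasSum (fun m : ℕ => u ^ m / (m ! : ℝ)) (Real.exp u) := by
  rw [Real.exp_eq_exp_ℝ]
  exact NormedSpace.expSeries_div_hasSum_exp u

/-- The reindexing equivalence. -/
private def reidx : (Σ n : ℕ, Fin (n / 2 + 1)) ≃ ℕ × ℕ where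
  toFun p := (p.1 - 2 * p.2.1, p.2.1)
  invFun q := ⟨q.1 + 2 * q.2, ⟨q.2, by omega⟩⟩
  left_inv p := by
    rcases p with ⟨n, k, hk⟩
    have h2 : 2 * k ≤ n := by omega
    have hn : n - 2 * k + 2 * k = n := by omega
    dsimp only
    refine Sigma.ext hn ?_
    dsimp only
    exact (Fin.heq_ext_iff (by omega)).2 rfl
  right_inv q := by
    rcases q with ⟨m, k⟩
    simp

theorem Qpoly_generating_function (α : ℝ) (hα : 0 ≤ α) (x y t : ℝ) :
    HasSum (fun n : ℕ => t ^ n / (n ! : ℝ) * Qpoly α n x y)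
      (Real.exp (x * t) * BesselWright2 α (y * t ^ 2)) := by
  set z : ℝ := y * t ^ 2 with hz
  set u : ℝ := x * t with hu
  set F : ℕ × ℕ → ℝ := fun p =>
      (u ^ p.1 / (p.1 ! : ℝ)) * (z ^ p.2 / ((p.2 ! : ℝ) * Real.Gamma (2 * p.2 + α + 1)))
    with hFdef
  have hF : HasSum F (Real.exp u * BesselWright2 α z) := by
    apply (hasSum_exp' u).mul (hasSum_w α hα z)
    apply summable_mul_of_summable_norm (f := fun m : ℕ => u ^ m / (m ! : ℝ))
      (g := fun k : ℕ => z ^ k / ((k ! : ℝ) * Real.Gamma (2 * k + α + 1)))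
    · simpa only [Real.norm_eq_abs] using (hasSum_exp' u).summable.abs
    · simpa only [Real.norm_eq_abs] using (summable_w α hα z).abs
  have hFe : HasSum (fun p : Σ n : ℕ, Fin (n / 2 + 1) => F (reidx p))
      (Real.exp u * BesselWright2 α z) :=
    (reidx.hasSum_iff).2 hF
  refine hFe.sigma (fun n => ?_)
  have key : (∑ k : Fin (n / 2 + 1), F (reidx ⟨n, k⟩)) = t ^ n / (n ! : ℝ) * Qpoly α n x y := by
    have hred : ∀ k : Fin (n / 2 + 1), F (reidx ⟨n, k⟩) =
        (u ^ (n - 2 * k.1) / ((n - 2 * k.1)! : ℝ)) *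
          (z ^ k.1 / ((k.1 ! : ℝ) * Real.Gamma (2 * k.1 + α + 1))) := fun k => rfl
    simp only [hred]
    rw [Fin.sum_univ_eq_sum_range (fun k =>
      (u ^ (n - 2 * k) / ((n - 2 * k)! : ℝ)) *
        (z ^ k / ((k ! : ℝ) * Real.Gamma (2 * k + α + 1))))]
    rw [Qpoly, ← mul_assoc, div_mul_cancel₀ _ (by exact_mod_cast (Nat.factorial_ne_zero n)),
      Finset.mul_sum]
    refine Finset.sum_congr rfl (fun k hk => ?_)
    have hk' : 2 * k ≤ n := by
      have := Finset.mem_range.mp hk; omega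
    have ht : t ^ n = t ^ (n - 2 * k) * (t ^ 2) ^ k := by
      rw [← pow_mul, ← pow_add]; congr 1; omega
    rw [hu, hz, mul_pow, mul_pow, ht]
    ring
  rw [← key]
  exact hasSum_fintype _
end
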